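/- arXiv:1208.2905 — 2 statements merged into one kernel-verified Lean document; each statement's English description precedes it below -/
import Mathlib

section
/- Let w be a twice continuously differentiable function of four variables (η,ξ,q,y) satisfying, at every point, the linear system w_{ηη} + w_{ξξ} − w_{ξq} = 0, w_{ξq} − w_{ηq} + w_{ξy} = 0, w_{ξq} + w_{ηq} − w_{qq} + w_{ηy} = 0. Define W(p,t,q,y) = w(p+t, p−t, q, y). Then W satisfies the Legendre-transformed mixed heavenly equation with θ = 1: W_{tq}W_{py} − W_{pq}W_{ty} + W_{tt}W_{qq} − (W_{tq})² + W_{pp}W_{qq} − (W_{pq})² = 0 at every point. -/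
private lemma derivA (F : ℂ × ℂ × ℂ × ℂ → ℂ) (hF : Differentiable ℂ F)
    (γ : ℂ → ℂ × ℂ × ℂ × ℂ) (v : ℂ × ℂ × ℂ × ℂ) (s : ℂ) (hγ : HasDerivAt γ v s) :
    deriv (fun s => F (γ s)) s = fderiv ℂ F (γ s) v :=
  ((hF (γ s)).hasFDerivAt.comp_hasDerivAt s hγ).deriv

private lemma derivB (F : ℂ × ℂ × ℂ × ℂ → ℂ) (hF : ContDiff ℂ 2 F)
    (γ : ℂ → ℂ × ℂ × ℂ × ℂ) (v : ℂ × ℂ × ℂ × ℂ) (s : ℂ)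
    (hγ : HasDerivAt γ v s) (u : ℂ × ℂ × ℂ × ℂ) :
    deriv (fun s => fderiv ℂ F (γ s) u) s = fderiv ℂ (fderiv ℂ F) (γ s) v u := by
  have h1 : ContDiff ℂ 1 (fderiv ℂ F) := hF.fderiv_right (by norm_num)
  have hd : HasFDerivAt (fderiv ℂ F) (fderiv ℂ (fderiv ℂ F) (γ s)) (γ s) :=
    (h1.differentiable one_ne_zero (γ s)).hasFDerivAt
  have h2 := ((ContinuousLinearMap.apply ℂ ℂ u).hasFDerivAt.comp (γ s) hd).comp_hasDerivAt s hγ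
  simpa [Function.comp_def] using h2.deriv



/-- Partial derivative with respect to the first argument. -/
noncomputable def pd1 (f : ℂ → ℂ → ℂ → ℂ → ℂ) (a b c d : ℂ) : ℂ :=
  deriv (fun s => f s b c d) a

/-- Partial derivative with respect to the second argument. -/
noncomputable def pd2 (f : ℂ → ℂ → ℂ → ℂ → ℂ) (a b c d : ℂ) : ℂ :=
  deriv (fun s => f a s c d) b

/-- Partial derivative with respect to the third argument. -/
noncomputable def pd3 (f : ℂ → ℂ → ℂ → ℂ → ℂ) (a b c d : ℂ) : ℂ :=
  deriv (fun s => f a b s d) c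

/-- Partial derivative with respect to the fourth argument. -/
noncomputable def pd4 (f : ℂ → ℂ → ℂ → ℂ → ℂ) (a b c d : ℂ) : ℂ :=
  deriv (fun s => f a b c s) d

set_option maxHeartbeats 2000000 in
/-- any twice continuously differentiable solution of the linear
system gives, after the substitution `η = p + t`, `ξ = p − t`, a solution of the
Legendre-transformed mixed heavenly equation with `θ = 1`. -/
theorem stmt17 (w : ℂ → ℂ → ℂ → ℂ → ℂ)
    (hw : ContDiff ℂ 2 (fun p : ℂ × ℂ × ℂ × ℂ => w p.1 p.2.1 p.2.2.1 p.2.2.2))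
    (h1 : ∀ η ξ q y : ℂ,
      pd1 (pd1 w) η ξ q y + pd2 (pd2 w) η ξ q y - pd2 (pd3 w) η ξ q y = 0)
    (h2 : ∀ η ξ q y : ℂ,
      pd2 (pd3 w) η ξ q y - pd1 (pd3 w) η ξ q y + pd2 (pd4 w) η ξ q y = 0)
    (h3 : ∀ η ξ q y : ℂ,
      pd2 (pd3 w) η ξ q y + pd1 (pd3 w) η ξ q y - pd3 (pd3 w) η ξ q y
        + pd1 (pd4 w) η ξ q y = 0)
    (W : ℂ → ℂ → ℂ → ℂ → ℂ)
    (hW : W = fun p t q y => w (p + t) (p - t) q y) :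
    ∀ p t q y : ℂ,
      pd2 (pd3 W) p t q y * pd1 (pd4 W) p t q y
        - pd1 (pd3 W) p t q y * pd2 (pd4 W) p t q y
        + pd2 (pd2 W) p t q y * pd3 (pd3 W) p t q y
        - (pd2 (pd3 W) p t q y) ^ 2
        + pd1 (pd1 W) p t q y * pd3 (pd3 W) p t q y
        - (pd1 (pd3 W) p t q y) ^ 2 = 0 := by
  subst hW
  intro p t q y
  set F : ℂ × ℂ × ℂ × ℂ → ℂ := fun p : ℂ × ℂ × ℂ × ℂ => w p.1 p.2.1 p.2.2.1 p.2.2.2 with hF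
  have hFd : Differentiable ℂ F := hw.differentiable (by norm_num)
  -- basis vectors
  -- coordinate paths for w
  have P1 : ∀ b c d a : ℂ, HasDerivAt (fun s : ℂ => ((s, b, c, d) : ℂ × ℂ × ℂ × ℂ))
      (1, 0, 0, 0) a := fun b c d a =>
    HasDerivAt.prodMk (hasDerivAt_id a) (HasDerivAt.prodMk (hasDerivAt_const a b)
      (HasDerivAt.prodMk (hasDerivAt_const a c) (hasDerivAt_const a d)))
  have P2 : ∀ a c d b : ℂ, HasDerivAt (fun s : ℂ => ((a, s, c, d) : ℂ × ℂ × ℂ × ℂ))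
      (0, 1, 0, 0) b := fun a c d b =>
    HasDerivAt.prodMk (hasDerivAt_const b a) (HasDerivAt.prodMk (hasDerivAt_id b)
      (HasDerivAt.prodMk (hasDerivAt_const b c) (hasDerivAt_const b d)))
  have P3 : ∀ a b d c : ℂ, HasDerivAt (fun s : ℂ => ((a, b, s, d) : ℂ × ℂ × ℂ × ℂ))
      (0, 0, 1, 0) c := fun a b d c =>
    HasDerivAt.prodMk (hasDerivAt_const c a) (HasDerivAt.prodMk (hasDerivAt_const c b)
      (HasDerivAt.prodMk (hasDerivAt_id c) (hasDerivAt_const c d)))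
  have P4 : ∀ a b c d : ℂ, HasDerivAt (fun s : ℂ => ((a, b, c, s) : ℂ × ℂ × ℂ × ℂ))
      (0, 0, 0, 1) d := fun a b c d =>
    HasDerivAt.prodMk (hasDerivAt_const d a) (HasDerivAt.prodMk (hasDerivAt_const d b)
      (HasDerivAt.prodMk (hasDerivAt_const d c) (hasDerivAt_id d)))
  -- paths for the p and t directions of W
  have Q1 : ∀ t q y p : ℂ, HasDerivAt (fun s : ℂ => ((s + t, s - t, q, y) : ℂ × ℂ × ℂ × ℂ))
      (1, 1, 0, 0) p := fun t q y p =>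
    HasDerivAt.prodMk ((hasDerivAt_id p).add_const t) (HasDerivAt.prodMk ((hasDerivAt_id p).sub_const t)
      (HasDerivAt.prodMk (hasDerivAt_const p q) (hasDerivAt_const p y)))
  have Q2 : ∀ p q y t : ℂ, HasDerivAt (fun s : ℂ => ((p + s, p - s, q, y) : ℂ × ℂ × ℂ × ℂ))
      (1, -1, 0, 0) t := fun p q y t =>
    HasDerivAt.prodMk ((hasDerivAt_id t).const_add p) (HasDerivAt.prodMk ((hasDerivAt_id t).const_sub p)
      (HasDerivAt.prodMk (hasDerivAt_const t q) (hasDerivAt_const t y)))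
  -- first derivatives of w
  have g1 : ∀ a b c d : ℂ, pd1 w a b c d = fderiv ℂ F (a, b, c, d) (1, 0, 0, 0) :=
    fun a b c d => derivA F hFd _ _ a (P1 b c d a)
  have g2 : ∀ a b c d : ℂ, pd2 w a b c d = fderiv ℂ F (a, b, c, d) (0, 1, 0, 0) :=
    fun a b c d => derivA F hFd _ _ b (P2 a c d b)
  have g3 : ∀ a b c d : ℂ, pd3 w a b c d = fderiv ℂ F (a, b, c, d) (0, 0, 1, 0) :=
    fun a b c d => derivA F hFd _ _ c (P3 a b d c)
  have g4 : ∀ a b c d : ℂ, pd4 w a b c d = fderiv ℂ F (a, b, c, d) (0, 0, 0, 1) :=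
    fun a b c d => derivA F hFd _ _ d (P4 a b c d)
  -- second derivatives of w
  have G11 : ∀ a b c d : ℂ, pd1 (pd1 w) a b c d
      = fderiv ℂ (fderiv ℂ F) (a, b, c, d) (1, 0, 0, 0) (1, 0, 0, 0) := by
    intro a b c d
    show deriv (fun s => pd1 w s b c d) a = _
    rw [show (fun s => pd1 w s b c d) = fun s => fderiv ℂ F (s, b, c, d) (1, 0, 0, 0)
      from funext fun s => g1 s b c d]
    exact derivB F hw _ _ a (P1 b c d a) _
  have G22 : ∀ a b c d : ℂ, pd2 (pd2 w) a b c d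
      = fderiv ℂ (fderiv ℂ F) (a, b, c, d) (0, 1, 0, 0) (0, 1, 0, 0) := by
    intro a b c d
    show deriv (fun s => pd2 w a s c d) b = _
    rw [show (fun s => pd2 w a s c d) = fun s => fderiv ℂ F (a, s, c, d) (0, 1, 0, 0)
      from funext fun s => g2 a s c d]
    exact derivB F hw _ _ b (P2 a c d b) _
  have G13 : ∀ a b c d : ℂ, pd1 (pd3 w) a b c d
      = fderiv ℂ (fderiv ℂ F) (a, b, c, d) (1, 0, 0, 0) (0, 0, 1, 0) := by
    intro a b c d
    show deriv (fun s => pd3 w s b c d) a = _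
    rw [show (fun s => pd3 w s b c d) = fun s => fderiv ℂ F (s, b, c, d) (0, 0, 1, 0)
      from funext fun s => g3 s b c d]
    exact derivB F hw _ _ a (P1 b c d a) _
  have G23 : ∀ a b c d : ℂ, pd2 (pd3 w) a b c d
      = fderiv ℂ (fderiv ℂ F) (a, b, c, d) (0, 1, 0, 0) (0, 0, 1, 0) := by
    intro a b c d
    show deriv (fun s => pd3 w a s c d) b = _
    rw [show (fun s => pd3 w a s c d) = fun s => fderiv ℂ F (a, s, c, d) (0, 0, 1, 0)
      from funext fun s => g3 a s c d]
    exact derivB F hw _ _ b (P2 a c d b) _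
  have G33 : ∀ a b c d : ℂ, pd3 (pd3 w) a b c d
      = fderiv ℂ (fderiv ℂ F) (a, b, c, d) (0, 0, 1, 0) (0, 0, 1, 0) := by
    intro a b c d
    show deriv (fun s => pd3 w a b s d) c = _
    rw [show (fun s => pd3 w a b s d) = fun s => fderiv ℂ F (a, b, s, d) (0, 0, 1, 0)
      from funext fun s => g3 a b s d]
    exact derivB F hw _ _ c (P3 a b d c) _
  have G14 : ∀ a b c d : ℂ, pd1 (pd4 w) a b c d
      = fderiv ℂ (fderiv ℂ F) (a, b, c, d) (1, 0, 0, 0) (0, 0, 0, 1) := by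
    intro a b c d
    show deriv (fun s => pd4 w s b c d) a = _
    rw [show (fun s => pd4 w s b c d) = fun s => fderiv ℂ F (s, b, c, d) (0, 0, 0, 1)
      from funext fun s => g4 s b c d]
    exact derivB F hw _ _ a (P1 b c d a) _
  have G24 : ∀ a b c d : ℂ, pd2 (pd4 w) a b c d
      = fderiv ℂ (fderiv ℂ F) (a, b, c, d) (0, 1, 0, 0) (0, 0, 0, 1) := by
    intro a b c d
    show deriv (fun s => pd4 w a s c d) b = _
    rw [show (fun s => pd4 w a s c d) = fun s => fderiv ℂ F (a, s, c, d) (0, 0, 0, 1)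
      from funext fun s => g4 a s c d]
    exact derivB F hw _ _ b (P2 a c d b) _
  -- first derivatives of W (as the explicit lambda)
  set V : ℂ → ℂ → ℂ → ℂ → ℂ := fun p t q y => w (p + t) (p - t) q y with hV
  have gV1 : ∀ p t q y : ℂ, pd1 V p t q y
      = fderiv ℂ F (p + t, p - t, q, y) (1, 1, 0, 0) :=
    fun p t q y => derivA F hFd _ _ p (Q1 t q y p)
  have gV2 : ∀ p t q y : ℂ, pd2 V p t q y
      = fderiv ℂ F (p + t, p - t, q, y) (1, -1, 0, 0) :=
    fun p t q y => derivA F hFd _ _ t (Q2 p q y t)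
  have gV3 : ∀ p t q y : ℂ, pd3 V p t q y
      = fderiv ℂ F (p + t, p - t, q, y) (0, 0, 1, 0) :=
    fun p t q y => derivA F hFd _ _ q (P3 (p + t) (p - t) y q)
  have gV4 : ∀ p t q y : ℂ, pd4 V p t q y
      = fderiv ℂ F (p + t, p - t, q, y) (0, 0, 0, 1) :=
    fun p t q y => derivA F hFd _ _ y (P4 (p + t) (p - t) q y)
  -- second derivatives of W
  have H11 : pd1 (pd1 V) p t q y
      = fderiv ℂ (fderiv ℂ F) (p + t, p - t, q, y) (1, 1, 0, 0) (1, 1, 0, 0) := by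
    show deriv (fun s => pd1 V s t q y) p = _
    rw [show (fun s => pd1 V s t q y)
        = fun s => fderiv ℂ F (s + t, s - t, q, y) (1, 1, 0, 0)
      from funext fun s => gV1 s t q y]
    exact derivB F hw _ _ p (Q1 t q y p) _
  have H22 : pd2 (pd2 V) p t q y
      = fderiv ℂ (fderiv ℂ F) (p + t, p - t, q, y) (1, -1, 0, 0) (1, -1, 0, 0) := by
    show deriv (fun s => pd2 V p s q y) t = _
    rw [show (fun s => pd2 V p s q y)
        = fun s => fderiv ℂ F (p + s, p - s, q, y) (1, -1, 0, 0)
      from funext fun s => gV2 p s q y]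
    exact derivB F hw _ _ t (Q2 p q y t) _
  have H13 : pd1 (pd3 V) p t q y
      = fderiv ℂ (fderiv ℂ F) (p + t, p - t, q, y) (1, 1, 0, 0) (0, 0, 1, 0) := by
    show deriv (fun s => pd3 V s t q y) p = _
    rw [show (fun s => pd3 V s t q y)
        = fun s => fderiv ℂ F (s + t, s - t, q, y) (0, 0, 1, 0)
      from funext fun s => gV3 s t q y]
    exact derivB F hw _ _ p (Q1 t q y p) _
  have H23 : pd2 (pd3 V) p t q y
      = fderiv ℂ (fderiv ℂ F) (p + t, p - t, q, y) (1, -1, 0, 0) (0, 0, 1, 0) := by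
    show deriv (fun s => pd3 V p s q y) t = _
    rw [show (fun s => pd3 V p s q y)
        = fun s => fderiv ℂ F (p + s, p - s, q, y) (0, 0, 1, 0)
      from funext fun s => gV3 p s q y]
    exact derivB F hw _ _ t (Q2 p q y t) _
  have H33 : pd3 (pd3 V) p t q y
      = fderiv ℂ (fderiv ℂ F) (p + t, p - t, q, y) (0, 0, 1, 0) (0, 0, 1, 0) := by
    show deriv (fun s => pd3 V p t s y) q = _
    rw [show (fun s => pd3 V p t s y)
        = fun s => fderiv ℂ F (p + t, p - t, s, y) (0, 0, 1, 0)
      from funext fun s => gV3 p t s y]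
    exact derivB F hw _ _ q (P3 (p + t) (p - t) y q) _
  have H14 : pd1 (pd4 V) p t q y
      = fderiv ℂ (fderiv ℂ F) (p + t, p - t, q, y) (1, 1, 0, 0) (0, 0, 0, 1) := by
    show deriv (fun s => pd4 V s t q y) p = _
    rw [show (fun s => pd4 V s t q y)
        = fun s => fderiv ℂ F (s + t, s - t, q, y) (0, 0, 0, 1)
      from funext fun s => gV4 s t q y]
    exact derivB F hw _ _ p (Q1 t q y p) _
  have H24 : pd2 (pd4 V) p t q y
      = fderiv ℂ (fderiv ℂ F) (p + t, p - t, q, y) (1, -1, 0, 0) (0, 0, 0, 1) := by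
    show deriv (fun s => pd4 V p s q y) t = _
    rw [show (fun s => pd4 V p s q y)
        = fun s => fderiv ℂ F (p + s, p - s, q, y) (0, 0, 0, 1)
      from funext fun s => gV4 p s q y]
    exact derivB F hw _ _ t (Q2 p q y t) _
  -- the second derivative at the relevant point
  set X : ℂ × ℂ × ℂ × ℂ := (p + t, p - t, q, y) with hX
  set D : (ℂ × ℂ × ℂ × ℂ) →L[ℂ] (ℂ × ℂ × ℂ × ℂ) →L[ℂ] ℂ := fderiv ℂ (fderiv ℂ F) X with hD
  -- vector decompositions
  have hv1 : ((1 : ℂ), (1 : ℂ), (0 : ℂ), (0 : ℂ))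
      = ((1 : ℂ), (0 : ℂ), (0 : ℂ), (0 : ℂ)) + ((0 : ℂ), (1 : ℂ), (0 : ℂ), (0 : ℂ)) := by
    norm_num [Prod.ext_iff]
  have hv2 : ((1 : ℂ), (-1 : ℂ), (0 : ℂ), (0 : ℂ))
      = ((1 : ℂ), (0 : ℂ), (0 : ℂ), (0 : ℂ)) - ((0 : ℂ), (1 : ℂ), (0 : ℂ), (0 : ℂ)) := by
    norm_num [Prod.ext_iff]
  -- rewrite hypotheses at X
  have h1' := h1 (p + t) (p - t) q y
  have h2' := h2 (p + t) (p - t) q y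
  have h3' := h3 (p + t) (p - t) q y
  rw [G11, G22, G23] at h1'
  rw [G23, G13, G24] at h2'
  rw [G23, G13, G33, G14] at h3'
  rw [H23, H14, H13, H24, H22, H33, H11]
  rw [hv1, hv2]
  simp only [← hX, ← hD, map_add, map_sub, ContinuousLinearMap.add_apply,
    ContinuousLinearMap.sub_apply] at h1' h2' h3' ⊢
  linear_combination 2 * (D (1, 0, 0, 0) (0, 0, 1, 0)) * h2'
    - 2 * (D (0, 1, 0, 0) (0, 0, 1, 0)) * h3'
    + 2 * (D (0, 0, 1, 0) (0, 0, 1, 0)) * h1'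
end

section
/- Let A, B, a₁, a₃, c₁, c₂, c₃, c₄, b₂, b₃, d₂, d₃ ∈ ℂ with A·a₃·c₁·c₄ ≠ 0, let β₁,…,β₅ ∈ ℂ, and let g₁, g₂, g₃, g₄ : ℂ → ℂ be twice differentiable. Set C = −c₃(Bc₁ + Ac₄)/c₁², a₂ = a₁c₂(−Ba₃c₁² + a₁c₁c₃B + a₁c₃c₄A)/(Aa₃c₁²c₄), a₄ = a₁(−Ba₃c₁² + a₁c₁c₃B + a₁c₃c₄A)/(Aa₃c₁²), and define u : ℂ⁴ → ℂ (variables (x,y,z,t)) by u = β₁ + g₁(a₁x + a₂y + a₃z + a₄t + β₂) + g₂(b₂y + b₃z + β₃) + g₃(c₁x + c₂y + c₃z + c₄t + β₄) + g₄(d₂y + d₃z + β₅). Then u satisfies the asymmetric heavenly equation u_{tx}u_{ty} − u_{tt}u_{xy} + A·u_{tz} + B·u_{xz} + C·u_{xx} = 0 at every point; in particular, for B = 0 it satisfies the evolution form of the second heavenly equation u_{tx}u_{ty} − u_{tt}u_{xy} + A·u_{tz} + C·u_{xx} = 0. -/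
private lemma hasDerivAt_lin (g : ℂ → ℂ) (hg : Differentiable ℂ g) (m k x : ℂ) :
    HasDerivAt (fun s => g (m * s + k)) (m * deriv g (m * x + k)) x := by
  have h1 : HasDerivAt (fun s : ℂ => m * s + k) m x := by
    simpa using ((hasDerivAt_id x).const_mul m).add_const k
  simpa [Function.comp_def, mul_comm] using ((hg (m * x + k)).hasDerivAt.comp x h1)

private lemma deriv_sum4 (h₁ h₂ h₃ h₄ : ℂ → ℂ)
    (d₁ : Differentiable ℂ h₁) (d₂ : Differentiable ℂ h₂)
    (d₃ : Differentiable ℂ h₃) (d₄ : Differentiable ℂ h₄)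
    (c m₁ k₁ m₂ k₂ m₃ k₃ m₄ k₄ x : ℂ) (F : ℂ → ℂ)
    (hF : ∀ s, F s = c + h₁ (m₁*s+k₁) + h₂ (m₂*s+k₂) + h₃ (m₃*s+k₃) + h₄ (m₄*s+k₄)) :
    deriv F x = m₁ * deriv h₁ (m₁*x+k₁) + m₂ * deriv h₂ (m₂*x+k₂)
      + m₃ * deriv h₃ (m₃*x+k₃) + m₄ * deriv h₄ (m₄*x+k₄) := by
  have hFe : F = fun s => c + h₁ (m₁*s+k₁) + h₂ (m₂*s+k₂) + h₃ (m₃*s+k₃) + h₄ (m₄*s+k₄) :=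
    funext hF
  rw [hFe]
  have H := ((((hasDerivAt_const x c).add (hasDerivAt_lin h₁ d₁ m₁ k₁ x)).add
    (hasDerivAt_lin h₂ d₂ m₂ k₂ x)).add (hasDerivAt_lin h₃ d₃ m₃ k₃ x)).add
    (hasDerivAt_lin h₄ d₄ m₄ k₄ x)
  simpa [Pi.add_def] using H.deriv

private lemma deriv_sum2 (h₁ h₃ : ℂ → ℂ)
    (d₁ : Differentiable ℂ h₁) (d₃ : Differentiable ℂ h₃)
    (m₁ k₁ m₃ k₃ x : ℂ) (F : ℂ → ℂ)
    (hF : ∀ s, F s = h₁ (m₁*s+k₁) + h₃ (m₃*s+k₃)) :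
    deriv F x = m₁ * deriv h₁ (m₁*x+k₁) + m₃ * deriv h₃ (m₃*x+k₃) := by
  have hFe : F = fun s => h₁ (m₁*s+k₁) + h₃ (m₃*s+k₃) := funext hF
  rw [hFe]
  simpa [Pi.add_def] using ((hasDerivAt_lin h₁ d₁ m₁ k₁ x).add (hasDerivAt_lin h₃ d₃ m₃ k₃ x)).deriv

private lemma diff_deriv (g : ℂ → ℂ) (hg : ContDiff ℂ 2 g) : Differentiable ℂ (deriv g) := by
  have h : ContDiff ℂ ((1 : ℕ) + 1) g := by exact_mod_cast hg
  exact ((contDiff_succ_iff_deriv.mp h).2.2).differentiable (by norm_num)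

/-- the functional ansatz solves the asymmetric heavenly equation,
and for `B = 0` the evolution form of the second heavenly equation. -/
theorem stmt18 (A B a₁ a₃ c₁ c₂ c₃ c₄ b₂ b₃ d₂ d₃ : ℂ)
    (hne : A * a₃ * c₁ * c₄ ≠ 0) (β₁ β₂ β₃ β₄ β₅ : ℂ)
    (g₁ g₂ g₃ g₄ : ℂ → ℂ)
    (hg₁ : ContDiff ℂ 2 g₁) (hg₂ : ContDiff ℂ 2 g₂)
    (hg₃ : ContDiff ℂ 2 g₃) (hg₄ : ContDiff ℂ 2 g₄)
    (C a₂ a₄ : ℂ)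
    (hC : C = -(c₃ * (B * c₁ + A * c₄)) / c₁ ^ 2)
    (ha₂ : a₂ = a₁ * c₂ * (-(B * a₃ * c₁ ^ 2) + a₁ * c₁ * c₃ * B + a₁ * c₃ * c₄ * A)
        / (A * a₃ * c₁ ^ 2 * c₄))
    (ha₄ : a₄ = a₁ * (-(B * a₃ * c₁ ^ 2) + a₁ * c₁ * c₃ * B + a₁ * c₃ * c₄ * A)
        / (A * a₃ * c₁ ^ 2))
    (u : ℂ → ℂ → ℂ → ℂ → ℂ)
    (hu : u = fun x y z t =>
      β₁ + g₁ (a₁ * x + a₂ * y + a₃ * z + a₄ * t + β₂)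
        + g₂ (b₂ * y + b₃ * z + β₃)
        + g₃ (c₁ * x + c₂ * y + c₃ * z + c₄ * t + β₄)
        + g₄ (d₂ * y + d₃ * z + β₅)) :
    (∀ x y z t : ℂ,
      pd4 (pd1 u) x y z t * pd4 (pd2 u) x y z t
        - pd4 (pd4 u) x y z t * pd1 (pd2 u) x y z t
        + A * pd4 (pd3 u) x y z t + B * pd1 (pd3 u) x y z t
        + C * pd1 (pd1 u) x y z t = 0)
    ∧ (B = 0 → ∀ x y z t : ℂ,
      pd4 (pd1 u) x y z t * pd4 (pd2 u) x y z t
        - pd4 (pd4 u) x y z t * pd1 (pd2 u) x y z t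
        + A * pd4 (pd3 u) x y z t + C * pd1 (pd1 u) x y z t = 0) := by
  have hd₁ : Differentiable ℂ g₁ := hg₁.differentiable (by norm_num)
  have hd₂ : Differentiable ℂ g₂ := hg₂.differentiable (by norm_num)
  have hd₃ : Differentiable ℂ g₃ := hg₃.differentiable (by norm_num)
  have hd₄ : Differentiable ℂ g₄ := hg₄.differentiable (by norm_num)
  have hh₁ : Differentiable ℂ (deriv g₁) := diff_deriv g₁ hg₁
  have hh₂ : Differentiable ℂ (deriv g₂) := diff_deriv g₂ hg₂
  have hh₃ : Differentiable ℂ (deriv g₃) := diff_deriv g₃ hg₃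
  have hh₄ : Differentiable ℂ (deriv g₄) := diff_deriv g₄ hg₄
  -- first partial derivatives
  have P1 : ∀ X Y Z T : ℂ, pd1 u X Y Z T
      = a₁ * deriv g₁ (a₁*X+a₂*Y+a₃*Z+a₄*T+β₂) + c₁ * deriv g₃ (c₁*X+c₂*Y+c₃*Z+c₄*T+β₄) := by
    intro X Y Z T
    have h := deriv_sum4 g₁ g₂ g₃ g₄ hd₁ hd₂ hd₃ hd₄ β₁
      a₁ (a₂*Y+a₃*Z+a₄*T+β₂) 0 (b₂*Y+b₃*Z+β₃) c₁ (c₂*Y+c₃*Z+c₄*T+β₄) 0 (d₂*Y+d₃*Z+β₅)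
      X (fun s => u s Y Z T) (fun s => by simp only [hu, zero_mul, zero_add]; ring_nf)
    simp only [pd1]
    rw [h]; ring_nf
  have P2 : ∀ X Y Z T : ℂ, pd2 u X Y Z T
      = a₂ * deriv g₁ (a₁*X+a₂*Y+a₃*Z+a₄*T+β₂) + b₂ * deriv g₂ (b₂*Y+b₃*Z+β₃)
        + c₂ * deriv g₃ (c₁*X+c₂*Y+c₃*Z+c₄*T+β₄) + d₂ * deriv g₄ (d₂*Y+d₃*Z+β₅) := by
    intro X Y Z T
    have h := deriv_sum4 g₁ g₂ g₃ g₄ hd₁ hd₂ hd₃ hd₄ β₁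
      a₂ (a₁*X+a₃*Z+a₄*T+β₂) b₂ (b₃*Z+β₃) c₂ (c₁*X+c₃*Z+c₄*T+β₄) d₂ (d₃*Z+β₅)
      Y (fun s => u X s Z T) (fun s => by simp only [hu]; ring_nf)
    simp only [pd2] at h ⊢
    rw [h]; ring_nf
  have P3 : ∀ X Y Z T : ℂ, pd3 u X Y Z T
      = a₃ * deriv g₁ (a₁*X+a₂*Y+a₃*Z+a₄*T+β₂) + b₃ * deriv g₂ (b₂*Y+b₃*Z+β₃)
        + c₃ * deriv g₃ (c₁*X+c₂*Y+c₃*Z+c₄*T+β₄) + d₃ * deriv g₄ (d₂*Y+d₃*Z+β₅) := by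
    intro X Y Z T
    have h := deriv_sum4 g₁ g₂ g₃ g₄ hd₁ hd₂ hd₃ hd₄ β₁
      a₃ (a₁*X+a₂*Y+a₄*T+β₂) b₃ (b₂*Y+β₃) c₃ (c₁*X+c₂*Y+c₄*T+β₄) d₃ (d₂*Y+β₅)
      Z (fun s => u X Y s T) (fun s => by simp only [hu]; ring_nf)
    simp only [pd3] at h ⊢
    rw [h]; ring_nf
  have P4 : ∀ X Y Z T : ℂ, pd4 u X Y Z T
      = a₄ * deriv g₁ (a₁*X+a₂*Y+a₃*Z+a₄*T+β₂) + c₄ * deriv g₃ (c₁*X+c₂*Y+c₃*Z+c₄*T+β₄) := by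
    intro X Y Z T
    have h := deriv_sum4 g₁ g₂ g₃ g₄ hd₁ hd₂ hd₃ hd₄ β₁
      a₄ (a₁*X+a₂*Y+a₃*Z+β₂) 0 (b₂*Y+b₃*Z+β₃) c₄ (c₁*X+c₂*Y+c₃*Z+β₄) 0 (d₂*Y+d₃*Z+β₅)
      T (fun s => u X Y Z s) (fun s => by simp only [hu, zero_mul, zero_add]; ring_nf)
    simp only [pd4] at h ⊢
    rw [h]; ring_nf
  -- second partial derivatives
  have Q41 : ∀ X Y Z T : ℂ, pd4 (pd1 u) X Y Z T
      = a₄ * (a₁ * deriv (deriv g₁) (a₁*X+a₂*Y+a₃*Z+a₄*T+β₂))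
        + c₄ * (c₁ * deriv (deriv g₃) (c₁*X+c₂*Y+c₃*Z+c₄*T+β₄)) := by
    intro X Y Z T
    have h := deriv_sum2 (fun w => a₁ * deriv g₁ w) (fun w => c₁ * deriv g₃ w)
      (hh₁.const_mul a₁) (hh₃.const_mul c₁)
      a₄ (a₁*X+a₂*Y+a₃*Z+β₂) c₄ (c₁*X+c₂*Y+c₃*Z+β₄) T
      (fun s => pd1 u X Y Z s) (fun s => by simp only [P1]; ring_nf)
    simp only [pd4] at h ⊢
    rw [h, deriv_const_mul_field, deriv_const_mul_field]; ring_nf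
  have Q44 : ∀ X Y Z T : ℂ, pd4 (pd4 u) X Y Z T
      = a₄ * (a₄ * deriv (deriv g₁) (a₁*X+a₂*Y+a₃*Z+a₄*T+β₂))
        + c₄ * (c₄ * deriv (deriv g₃) (c₁*X+c₂*Y+c₃*Z+c₄*T+β₄)) := by
    intro X Y Z T
    have h := deriv_sum2 (fun w => a₄ * deriv g₁ w) (fun w => c₄ * deriv g₃ w)
      (hh₁.const_mul a₄) (hh₃.const_mul c₄)
      a₄ (a₁*X+a₂*Y+a₃*Z+β₂) c₄ (c₁*X+c₂*Y+c₃*Z+β₄) T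
      (fun s => pd4 u X Y Z s) (fun s => by simp only [P4]; ring_nf)
    simp only [pd4] at h ⊢
    rw [h, deriv_const_mul_field, deriv_const_mul_field]; ring_nf
  have Q11 : ∀ X Y Z T : ℂ, pd1 (pd1 u) X Y Z T
      = a₁ * (a₁ * deriv (deriv g₁) (a₁*X+a₂*Y+a₃*Z+a₄*T+β₂))
        + c₁ * (c₁ * deriv (deriv g₃) (c₁*X+c₂*Y+c₃*Z+c₄*T+β₄)) := by
    intro X Y Z T
    have h := deriv_sum2 (fun w => a₁ * deriv g₁ w) (fun w => c₁ * deriv g₃ w)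
      (hh₁.const_mul a₁) (hh₃.const_mul c₁)
      a₁ (a₂*Y+a₃*Z+a₄*T+β₂) c₁ (c₂*Y+c₃*Z+c₄*T+β₄) X
      (fun s => pd1 u s Y Z T) (fun s => by simp only [P1]; ring_nf)
    simp only [pd1] at h ⊢
    rw [h, deriv_const_mul_field, deriv_const_mul_field]; ring_nf
  have Q42 : ∀ X Y Z T : ℂ, pd4 (pd2 u) X Y Z T
      = a₄ * (a₂ * deriv (deriv g₁) (a₁*X+a₂*Y+a₃*Z+a₄*T+β₂))
        + c₄ * (c₂ * deriv (deriv g₃) (c₁*X+c₂*Y+c₃*Z+c₄*T+β₄)) := by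
    intro X Y Z T
    have h := deriv_sum4 (fun w => a₂ * deriv g₁ w) (fun w => b₂ * deriv g₂ w)
      (fun w => c₂ * deriv g₃ w) (fun w => d₂ * deriv g₄ w)
      (hh₁.const_mul a₂) (hh₂.const_mul b₂) (hh₃.const_mul c₂) (hh₄.const_mul d₂)
      0 a₄ (a₁*X+a₂*Y+a₃*Z+β₂) 0 (b₂*Y+b₃*Z+β₃) c₄ (c₁*X+c₂*Y+c₃*Z+β₄) 0 (d₂*Y+d₃*Z+β₅)
      T (fun s => pd2 u X Y Z s)
      (fun s => by simp only [P2, zero_mul, zero_add]; ring_nf)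
    simp only [pd4] at h ⊢
    rw [h, deriv_const_mul_field, deriv_const_mul_field, deriv_const_mul_field,
      deriv_const_mul_field]
    ring_nf
  have Q12 : ∀ X Y Z T : ℂ, pd1 (pd2 u) X Y Z T
      = a₁ * (a₂ * deriv (deriv g₁) (a₁*X+a₂*Y+a₃*Z+a₄*T+β₂))
        + c₁ * (c₂ * deriv (deriv g₃) (c₁*X+c₂*Y+c₃*Z+c₄*T+β₄)) := by
    intro X Y Z T
    have h := deriv_sum4 (fun w => a₂ * deriv g₁ w) (fun w => b₂ * deriv g₂ w)
      (fun w => c₂ * deriv g₃ w) (fun w => d₂ * deriv g₄ w)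
      (hh₁.const_mul a₂) (hh₂.const_mul b₂) (hh₃.const_mul c₂) (hh₄.const_mul d₂)
      0 a₁ (a₂*Y+a₃*Z+a₄*T+β₂) 0 (b₂*Y+b₃*Z+β₃) c₁ (c₂*Y+c₃*Z+c₄*T+β₄) 0 (d₂*Y+d₃*Z+β₅)
      X (fun s => pd2 u s Y Z T)
      (fun s => by simp only [P2, zero_mul, zero_add]; ring_nf)
    simp only [pd1] at h ⊢
    rw [h, deriv_const_mul_field, deriv_const_mul_field, deriv_const_mul_field,
      deriv_const_mul_field]
    ring_nf
  have Q43 : ∀ X Y Z T : ℂ, pd4 (pd3 u) X Y Z T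
      = a₄ * (a₃ * deriv (deriv g₁) (a₁*X+a₂*Y+a₃*Z+a₄*T+β₂))
        + c₄ * (c₃ * deriv (deriv g₃) (c₁*X+c₂*Y+c₃*Z+c₄*T+β₄)) := by
    intro X Y Z T
    have h := deriv_sum4 (fun w => a₃ * deriv g₁ w) (fun w => b₃ * deriv g₂ w)
      (fun w => c₃ * deriv g₃ w) (fun w => d₃ * deriv g₄ w)
      (hh₁.const_mul a₃) (hh₂.const_mul b₃) (hh₃.const_mul c₃) (hh₄.const_mul d₃)
      0 a₄ (a₁*X+a₂*Y+a₃*Z+β₂) 0 (b₂*Y+b₃*Z+β₃) c₄ (c₁*X+c₂*Y+c₃*Z+β₄) 0 (d₂*Y+d₃*Z+β₅)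
      T (fun s => pd3 u X Y Z s)
      (fun s => by simp only [P3, zero_mul, zero_add]; ring_nf)
    simp only [pd4] at h ⊢
    rw [h, deriv_const_mul_field, deriv_const_mul_field, deriv_const_mul_field,
      deriv_const_mul_field]
    ring_nf
  have Q13 : ∀ X Y Z T : ℂ, pd1 (pd3 u) X Y Z T
      = a₁ * (a₃ * deriv (deriv g₁) (a₁*X+a₂*Y+a₃*Z+a₄*T+β₂))
        + c₁ * (c₃ * deriv (deriv g₃) (c₁*X+c₂*Y+c₃*Z+c₄*T+β₄)) := by
    intro X Y Z T
    have h := deriv_sum4 (fun w => a₃ * deriv g₁ w) (fun w => b₃ * deriv g₂ w)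
      (fun w => c₃ * deriv g₃ w) (fun w => d₃ * deriv g₄ w)
      (hh₁.const_mul a₃) (hh₂.const_mul b₃) (hh₃.const_mul c₃) (hh₄.const_mul d₃)
      0 a₁ (a₂*Y+a₃*Z+a₄*T+β₂) 0 (b₂*Y+b₃*Z+β₃) c₁ (c₂*Y+c₃*Z+c₄*T+β₄) 0 (d₂*Y+d₃*Z+β₅)
      X (fun s => pd3 u s Y Z T)
      (fun s => by simp only [P3, zero_mul, zero_add]; ring_nf)
    simp only [pd1] at h ⊢
    rw [h, deriv_const_mul_field, deriv_const_mul_field, deriv_const_mul_field,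
      deriv_const_mul_field]
    ring_nf
  -- nonvanishing facts
  have hA : A ≠ 0 := fun h => hne (by simp [h])
  have ha₃ : a₃ ≠ 0 := fun h => hne (by simp [h])
  have hc₁ : c₁ ≠ 0 := fun h => hne (by simp [h])
  have hc₄ : c₄ ≠ 0 := fun h => hne (by simp [h])
  have main : ∀ x y z t : ℂ,
      pd4 (pd1 u) x y z t * pd4 (pd2 u) x y z t
        - pd4 (pd4 u) x y z t * pd1 (pd2 u) x y z t
        + A * pd4 (pd3 u) x y z t + B * pd1 (pd3 u) x y z t
        + C * pd1 (pd1 u) x y z t = 0 := by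
    intro x y z t
    have e1 : a₄ * c₂ - a₂ * c₄ = 0 := by
      rw [ha₂, ha₄]; field_simp; ring
    have e2 : A * a₃ * a₄ + B * a₁ * a₃ + C * a₁ ^ 2 = 0 := by
      rw [ha₄, hC]; field_simp; ring
    have e3 : A * c₃ * c₄ + B * c₁ * c₃ + C * c₁ ^ 2 = 0 := by
      rw [hC]; field_simp; ring
    rw [Q41, Q42, Q44, Q12, Q43, Q13, Q11]
    set q1 := deriv (deriv g₁) (a₁*x+a₂*y+a₃*z+a₄*t+β₂) with hq1
    set q3 := deriv (deriv g₃) (c₁*x+c₂*y+c₃*z+c₄*t+β₄) with hq3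
    linear_combination (-(a₄*c₁-a₁*c₄)*q1*q3) * e1 + q1 * e2 + q3 * e3
  refine ⟨main, fun hB x y z t => ?_⟩
  have h := main x y z t
  rw [hB] at h
  simpa using h
end
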